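/- arXiv:math/0608259 — 2 statements merged into one kernel-verified Lean document; each statement's English description precedes it below -/
import Mathlib

section
/- A subshift X ⊆ Σ^ℤ has property g if and only if X has a strict g-function. -/
open Set Filter Topology

/-! Basic symbolic dynamics notions.

* The alphabet is a nonempty finite type `A` with the discrete topology; `A^ℤ` and `A^ℕ`
  carry the product topology.
* A left-infinite sequence `x⁻ = (x_i)_{i ≤ 0}` is encoded as `u : ℕ → A` with `u n = x (-n)`.
* Finite words are lists, read left to right.
-/

/-- The shift `S`. -/
def shiftMap {A : Type*} (x : ℤ → A) : ℤ → A := fun i => x (i + 1)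

/-- A subshift: a nonempty closed shift-invariant subset of `A^ℤ`. -/
def IsSubshift {A : Type*} [TopologicalSpace A] (X : Set (ℤ → A)) : Prop :=
  X.Nonempty ∧ IsClosed X ∧ shiftMap '' X = X

/-- `X⁻`: the left-infinite rays of points of `X` (encoded via `u n = x (-n)`). -/
def Xminus {A : Type*} (X : Set (ℤ → A)) : Set (ℕ → A) :=
  {u | ∃ x ∈ X, ∀ n : ℕ, u n = x (-(n : ℤ))}

/-- The word `w` occurs in `x` (as a block of consecutive coordinates). -/
def Occurs {A : Type*} (w : List A) (x : ℤ → A) : Prop :=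
  ∃ i : ℤ, ∀ j : Fin w.length, x (i + ((j : ℕ) : ℤ)) = w.get j

/-- A finite word is admissible for `X` if it occurs in some point of `X`. -/
def Admissible {A : Type*} (X : Set (ℤ → A)) (w : List A) : Prop :=
  ∃ x ∈ X, Occurs w x

/-- The left ray `u` ends in the word `w`, i.e. `(x_{-k},…,x_0) = w` where `|w| = k+1`. -/
def EndsIn {A : Type*} (u : ℕ → A) (w : List A) : Prop :=
  ∀ j : Fin w.length, u (w.length - 1 - (j : ℕ)) = w.get j

/-- `Γ₁⁺(x⁻)`: the letters that can follow the left ray `u` in `X`. -/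
def Gamma1 {A : Type*} (X : Set (ℤ → A)) (u : ℕ → A) : Set A :=
  {σ | ∃ x ∈ X, (∀ n : ℕ, x (-(n : ℤ)) = u n) ∧ x 1 = σ}

/-- `x` carries the word `b` on the coordinate interval `[-(|b| - 1), 0]`. -/
def EndsAtZero {A : Type*} (x : ℤ → A) (b : List A) : Prop :=
  ∀ j : Fin b.length, x (((j : ℕ) : ℤ) - ((b.length : ℤ) - 1)) = b.get j

/-- `c ∈ ω⁺(b)`: every point of `X` carrying `b` ending at coordinate `0` can be modified
on the positive coordinates so as to continue with the word `c`. -/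
def OmegaWord {A : Type*} (X : Set (ℤ → A)) (b c : List A) : Prop :=
  ∀ x ∈ X, EndsAtZero x b →
    ∃ x' ∈ X, (∀ i : ℤ, i ≤ 0 → x' i = x i) ∧
      ∀ j : Fin c.length, x' (((j : ℕ) : ℤ) + 1) = c.get j

/-- `ω₁⁺(b)`. -/
def omega1 {A : Type*} (X : Set (ℤ → A)) (b : List A) : Set A :=
  {σ | OmegaWord X b [σ]}

/-- The word `(x_{-n},…,x_0)` read off the left ray `u`. -/
def lastWord {A : Type*} (u : ℕ → A) (n : ℕ) : List A :=
  List.ofFn fun j : Fin (n + 1) => u (n - (j : ℕ))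

/-- `Δ₁⁺(x⁻) = ⋃ₙ ω₁⁺((x_{-n},…,x_0))`. -/
def Delta1 {A : Type*} (X : Set (ℤ → A)) (u : ℕ → A) : Set A :=
  ⋃ n : ℕ, omega1 X (lastWord u n)

/-- Property g: `Δ₁⁺(x⁻) ≠ ∅` for every `x⁻ ∈ X⁻`. -/
def PropertyG {A : Type*} (X : Set (ℤ → A)) : Prop :=
  ∀ u ∈ Xminus X, (Delta1 X u).Nonempty

/-- A g-function for `X`, encoded as a total function `g : (ℕ → A) → A → ℝ`:
continuity (of the restriction to the graph of `Γ₁⁺`, i.e. of the map on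
`{(x⁻,σ) : σ ∈ Γ₁⁺(x⁻)}`), values in `[0,1]` there, and the normalization
`∑_{σ ∈ Γ₁⁺(x⁻)} g (x⁻, σ) = 1`. -/
def IsGFunction {A : Type*} [Fintype A] [TopologicalSpace A] (X : Set (ℤ → A))
    (g : (ℕ → A) → A → ℝ) : Prop :=
  ContinuousOn (fun p : (ℕ → A) × A => g p.1 p.2)
      {p : (ℕ → A) × A | p.1 ∈ Xminus X ∧ p.2 ∈ Gamma1 X p.1} ∧
  (∀ u ∈ Xminus X, ∀ σ ∈ Gamma1 X u, g u σ ∈ Set.Icc (0 : ℝ) 1) ∧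
  (∀ u ∈ Xminus X, ∑ σ : A, (Gamma1 X u).indicator (g u) σ = 1)

/-- Property (D): for every admissible word `b` and letter `σ` with `bσ` admissible there
is a word `a` with `ab` admissible and `σ ∈ ω₁⁺(ab)`. -/
def PropertyD {A : Type*} (X : Set (ℤ → A)) : Prop :=
  ∀ (b : List A) (σ : A), b ≠ [] → Admissible X (b ++ [σ]) →
    ∃ a : List A, a ≠ [] ∧ Admissible X (a ++ b) ∧ σ ∈ omega1 X (a ++ b)

/-- A strict g-function: a g-function that is positive on `Δ₁⁺`. -/
def IsStrictGFunction {A : Type*} [Fintype A] [TopologicalSpace A] (X : Set (ℤ → A))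
    (g : (ℕ → A) → A → ℝ) : Prop :=
  IsGFunction X g ∧ ∀ u ∈ Xminus X, ∀ σ ∈ Delta1 X u, 0 < g u σ

section Aux
variable {A : Type*} {X : Set (ℤ → A)}

lemma lastWord_length (u : ℕ → A) (n : ℕ) : (lastWord u n).length = n + 1 := by
  simp [lastWord]

lemma lastWord_get (u : ℕ → A) (n : ℕ) (j : Fin (lastWord u n).length) :
    (lastWord u n).get j = u (n - (j : ℕ)) := by
  rw [List.get_eq_getElem]
  simp [lastWord, List.getElem_ofFn, -List.ofFn_succ]

lemma endsAtZero_lastWord_iff {u : ℕ → A} {x : ℤ → A} {n : ℕ} :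
    EndsAtZero x (lastWord u n) ↔ ∀ m : ℕ, m ≤ n → x (-(m : ℤ)) = u m := by
  constructor
  · intro h m hm
    have hj : n - m < (lastWord u n).length := by rw [lastWord_length]; omega
    have := h ⟨n - m, hj⟩
    rw [lastWord_get] at this
    simp only [lastWord_length] at this
    have hnm : n - (n - m) = m := by omega
    rw [hnm] at this
    convert this using 2
    push_cast [Nat.cast_sub hm, Nat.cast_sub (Nat.sub_le n m)]
    omega
  · intro h j
    rw [lastWord_get]
    have hj : (j : ℕ) < n + 1 := by exact (Fin.cast (lastWord_length u n) j).is_lt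
    have := h (n - (j : ℕ)) (by omega)
    convert this using 2
    simp only [lastWord_length]
    push_cast [Nat.cast_sub (by omega : n - (j:ℕ) ≤ n)]
    omega

/-- agreement on nonpositive coordinates from agreement of rays -/
lemma agree_nonpos {x y : ℤ → A} (h : ∀ m : ℕ, y (-(m : ℤ)) = x (-(m : ℤ))) :
    ∀ i : ℤ, i ≤ 0 → y i = x i := by
  intro i hi
  have : i = -(((-i).toNat : ℕ) : ℤ) := by
    rw [Int.toNat_of_nonneg (by omega)]; ring
  rw [this]; exact h _

/-- L1: `ω₁⁺` of a suffix word of `u` is contained in `Γ₁⁺(u)`. -/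
lemma omega1_subset_Gamma1 {u : ℕ → A} (hu : u ∈ Xminus X) (n : ℕ) :
    omega1 X (lastWord u n) ⊆ Gamma1 X u := by
  rintro σ hσ
  obtain ⟨x, hxX, hx⟩ := hu
  have hE : EndsAtZero x (lastWord u n) :=
    endsAtZero_lastWord_iff.2 fun m _ => (hx m).symm
  obtain ⟨x', hx'X, hagree, hlet⟩ := hσ x hxX hE
  refine ⟨x', hx'X, fun m => ?_, ?_⟩
  · rw [agree_nonpos (fun m => hagree _ (by omega)) _ (by omega), ← hx m]
  · have := hlet ⟨0, by simp⟩
    simpa using this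

/-- L2: if `σ ∉ ω₁⁺(lastWord u n)` then there is a ray `v` agreeing with `u`
up to `n` with `σ ∉ Γ₁⁺(v)`. -/
lemma exists_ray_of_not_omega1 {u : ℕ → A} {σ : A} {n : ℕ}
    (h : σ ∉ omega1 X (lastWord u n)) :
    ∃ v ∈ Xminus X, (∀ m : ℕ, m ≤ n → v m = u m) ∧ σ ∉ Gamma1 X v := by
  simp only [omega1, OmegaWord, Set.mem_setOf_eq] at h
  push_neg at h
  obtain ⟨x, hxX, hE, hno⟩ := h
  refine ⟨fun m => x (-(m : ℤ)), ⟨x, hxX, fun m => rfl⟩, ?_, ?_⟩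
  · intro m hm; exact endsAtZero_lastWord_iff.1 hE m hm
  · rintro ⟨y, hyX, hyray, hy1⟩
    obtain ⟨j, hj⟩ := hno y hyX (agree_nonpos hyray)
    apply hj
    have hj0 : (j : ℕ) = 0 := by have h2 : (j : ℕ) < 1 := j.2; omega
    simp [hj0, hy1]

end Aux

section GFun
variable {A : Type*} [Fintype A] [TopologicalSpace A] [DiscreteTopology A]

open Classical in
noncomputable def wFun (X : Set (ℤ → A)) (u : ℕ → A) (σ : A) : ℝ :=
  ∑' n : ℕ, if σ ∈ omega1 X (lastWord u n) then ((1 : ℝ)/2) ^ n else 0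

noncomputable def WFun (X : Set (ℤ → A)) (u : ℕ → A) : ℝ := ∑ σ : A, wFun X u σ

noncomputable def gFun (X : Set (ℤ → A)) (u : ℕ → A) (σ : A) : ℝ :=
  wFun X u σ / WFun X u

open Classical in
lemma wSummable (X : Set (ℤ → A)) (u : ℕ → A) (σ : A) :
    Summable (fun n : ℕ => if σ ∈ omega1 X (lastWord u n) then ((1 : ℝ)/2) ^ n else 0) := by
  apply Summable.of_nonneg_of_le (fun n => by split <;> positivity)
    (fun n => ?_) summable_geometric_two
  split
  · exact le_of_eq (by norm_num)
  · positivity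

open Classical in
lemma continuous_wFun (X : Set (ℤ → A)) :
    Continuous (fun p : (ℕ → A) × A => wFun X p.1 p.2) := by
  apply continuous_tsum (u := fun n : ℕ => ((1:ℝ)/2) ^ n) ?_ summable_geometric_two ?_
  · intro n
    have key : (fun p : (ℕ → A) × A =>
        (if p.2 ∈ omega1 X (lastWord p.1 n) then ((1 : ℝ)/2) ^ n else 0)) =
        (fun q : (Fin (n+1) → A) × A =>
          if q.2 ∈ omega1 X (List.ofFn fun j : Fin (n+1) =>
            q.1 (⟨n - (j : ℕ), by omega⟩ : Fin (n+1))) then ((1 : ℝ)/2) ^ n else 0) ∘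
        (fun p => (fun j : Fin (n+1) => p.1 (j : ℕ), p.2)) := rfl
    rw [key]
    have h1 : Continuous (fun p : (ℕ → A) × A => fun j : Fin (n+1) => p.1 (j : ℕ)) :=
      continuous_pi fun j => (continuous_apply ((j : ℕ) : ℕ)).comp continuous_fst
    exact (continuous_of_discreteTopology).comp (h1.prodMk continuous_snd)
  · intro n p
    split
    · rw [Real.norm_eq_abs, abs_of_nonneg (by positivity)]
    · simp only [norm_zero]
      positivity

end GFun

section GFun2
variable {A : Type*} [Fintype A] [TopologicalSpace A] [DiscreteTopology A]
  {X : Set (ℤ → A)} {u : ℕ → A} {σ : A}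

lemma wFun_nonneg : 0 ≤ wFun X u σ :=
  tsum_nonneg fun n => by split <;> positivity

lemma wFun_le_WFun : wFun X u σ ≤ WFun X u :=
  Finset.single_le_sum (f := fun τ => wFun X u τ) (fun τ _ => wFun_nonneg) (Finset.mem_univ σ)

lemma wFun_pos_of_delta (hσ : σ ∈ Delta1 X u) : 0 < wFun X u σ := by
  obtain ⟨n, hn⟩ : ∃ n, σ ∈ omega1 X (lastWord u n) := by
    simpa [Delta1, Set.mem_iUnion] using hσ
  have h2 := Summable.le_tsum (wSummable X u σ) n (fun m _ => by split <;> positivity)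
  rw [if_pos hn] at h2
  exact lt_of_lt_of_le (by positivity) h2

lemma wFun_eq_zero (hu : u ∈ Xminus X) (hσ : σ ∉ Gamma1 X u) : wFun X u σ = 0 := by
  unfold wFun
  convert tsum_zero with n
  rw [if_neg]
  exact fun h => hσ (omega1_subset_Gamma1 hu n h)

lemma WFun_pos (hPG : PropertyG X) (hu : u ∈ Xminus X) : 0 < WFun X u := by
  obtain ⟨τ, hτ⟩ := hPG u hu
  exact lt_of_lt_of_le (wFun_pos_of_delta hτ) wFun_le_WFun

lemma continuous_WFun : Continuous (WFun X) := by
  unfold WFun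
  exact continuous_finset_sum _ fun σ _ =>
    (continuous_wFun X).comp (continuous_id.prodMk continuous_const)

lemma forward_dir (hPG : PropertyG X) : IsStrictGFunction X (gFun X) := by
  have hWpos : ∀ u ∈ Xminus X, 0 < WFun X u := fun u hu => WFun_pos hPG hu
  refine ⟨⟨?_, ?_, ?_⟩, ?_⟩
  · exact ContinuousOn.div ((continuous_wFun X).continuousOn)
      ((continuous_WFun.comp continuous_fst).continuousOn)
      fun p hp => (hWpos p.1 hp.1).ne'
  · intro u hu σ hσ
    exact ⟨div_nonneg wFun_nonneg (le_of_lt (hWpos u hu)),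
      (div_le_one (hWpos u hu)).2 wFun_le_WFun⟩
  · intro u hu
    have h1 : ∀ σ : A, (Gamma1 X u).indicator (gFun X u) σ = gFun X u σ := by
      intro σ
      by_cases h : σ ∈ Gamma1 X u
      · rw [Set.indicator_of_mem h]
      · rw [Set.indicator_of_notMem h, gFun, wFun_eq_zero hu h, zero_div]
    rw [Finset.sum_congr rfl (fun σ _ => h1 σ)]
    rw [show (∑ σ : A, gFun X u σ) = (∑ σ : A, wFun X u σ) / WFun X u from
      (Finset.sum_div _ _ _).symm]
    exact div_self (hWpos u hu).ne'
  · intro u hu σ hσ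
    exact div_pos (wFun_pos_of_delta hσ) (hWpos u hu)

end GFun2


lemma backward_dir {A : Type*} [Fintype A] [Nonempty A] [TopologicalSpace A]
    [DiscreteTopology A] {X : Set (ℤ → A)} (hX : IsSubshift X) {g : (ℕ → A) → A → ℝ}
    (hg : IsGFunction X g) : PropertyG X := by
  classical
  obtain ⟨hcont, hrange, hsum⟩ := hg
  intro u hu
  by_contra hne
  rw [Set.not_nonempty_iff_eq_empty] at hne
  have hnot : ∀ σ : A, ∀ n : ℕ, σ ∉ omega1 X (lastWord u n) := by
    intro σ n h
    have : σ ∈ Delta1 X u := Set.mem_iUnion.2 ⟨n, h⟩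
    simp [hne] at this
  have hsum_u := hsum u hu
  have hexσ : ∃ σ : A, 0 < (Gamma1 X u).indicator (g u) σ := by
    by_contra hc
    push_neg at hc
    have h0 : (1 : ℝ) ≤ 0 := hsum_u ▸ Finset.sum_nonpos (fun σ _ => hc σ)
    linarith
  obtain ⟨σ, hσpos⟩ := hexσ
  have hσΓ : σ ∈ Gamma1 X u := by
    by_contra h; rw [Set.indicator_of_notMem h] at hσpos; linarith
  rw [Set.indicator_of_mem hσΓ] at hσpos
  -- a sequence of rays agreeing with `u` on longer and longer prefixes, avoiding `σ`
  have hch : ∀ n : ℕ, ∃ v ∈ Xminus X, (∀ m : ℕ, m ≤ n → v m = u m) ∧ σ ∉ Gamma1 X v :=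
    fun n => exists_ray_of_not_omega1 (hnot σ n)
  choose v hvX hvagree hvσ using hch
  have hvtend : Tendsto v atTop (𝓝 u) := by
    rw [tendsto_pi_nhds]
    intro i
    refine Tendsto.congr' ?_ (tendsto_const_nhds (x := u i))
    filter_upwards [eventually_ge_atTop i] with n hn
    exact (hvagree n i hn).symm
  have hXcomp : IsCompact X := hX.2.1.isCompact
  -- upper semicontinuity of Γ₁⁺ along the sequence
  have hsemi : ∀ τ : A, τ ∉ Gamma1 X u → ∀ᶠ n in atTop, τ ∉ Gamma1 X (v n) := by
    intro τ hτ
    by_contra hc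
    rw [Filter.not_eventually] at hc
    obtain ⟨φ, hφmono, hφ⟩ :=
      Filter.extraction_of_frequently_atTop (hc.mono fun n h => not_not.1 h)
    choose x hxX hxray hx1 using hφ
    obtain ⟨y, hyX, ψ, hψmono, hψtend⟩ := hXcomp.tendsto_subseq hxX
    apply hτ
    refine ⟨y, hyX, ?_, ?_⟩
    · intro m
      have h1 : Tendsto (fun k => x (ψ k) (-(m : ℤ))) atTop (𝓝 (y (-(m : ℤ)))) :=
        ((continuous_apply (-(m : ℤ))).tendsto y).comp hψtend
      have h2 : ∀ᶠ k in atTop, x (ψ k) (-(m : ℤ)) = u m := by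
        filter_upwards [eventually_ge_atTop m] with k hk
        rw [hxray (ψ k) m]
        exact hvagree (φ (ψ k)) m (le_trans hk (le_trans hψmono.le_apply hφmono.le_apply))
      exact tendsto_nhds_unique (h1.congr' h2) tendsto_const_nhds
    · have h1 : Tendsto (fun k => x (ψ k) 1) atTop (𝓝 (y 1)) :=
        ((continuous_apply (1 : ℤ)).tendsto y).comp hψtend
      exact tendsto_nhds_unique
        (h1.congr' (Eventually.of_forall fun k => hx1 (ψ k))) tendsto_const_nhds
  set c : ℝ := (Fintype.card A : ℝ) with hcdef
  have hc0 : 0 < c := by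
    rw [hcdef]; exact_mod_cast Fintype.card_pos
  set ε : ℝ := g u σ / (2 * c) with hε
  have hεpos : 0 < ε := by
    rw [hε]; positivity
  have hcε : c * ε = g u σ / 2 := by
    rw [hε]; field_simp
  -- continuity bound
  have hbound : ∀ τ : A, ∀ᶠ n in atTop,
      (τ ∈ Gamma1 X (v n) → g (v n) τ ≤ g u τ + ε) := by
    intro τ
    by_cases hτ : τ ∈ Gamma1 X u
    · by_contra hc
      rw [Filter.not_eventually] at hc
      obtain ⟨φ, hφmono, hφ⟩ :=
        Filter.extraction_of_frequently_atTop (hc.mono fun n h => by push_neg at h; exact h)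
      have htend2 : Tendsto (fun k => (v (φ k), τ)) atTop
          (𝓝[{p : (ℕ → A) × A | p.1 ∈ Xminus X ∧ p.2 ∈ Gamma1 X p.1}] (u, τ)) := by
        apply tendsto_nhdsWithin_of_tendsto_nhds_of_eventually_within
        · exact (hvtend.comp hφmono.tendsto_atTop).prodMk_nhds tendsto_const_nhds
        · exact Eventually.of_forall fun k => ⟨hvX (φ k), (hφ k).1⟩
      have htend3 : Tendsto (fun k => g (v (φ k)) τ) atTop (𝓝 (g u τ)) :=
        (hcont (u, τ) ⟨hu, hτ⟩).tendsto.comp htend2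
      have hle : g u τ + ε ≤ g u τ :=
        ge_of_tendsto htend3 (Eventually.of_forall fun k => le_of_lt (hφ k).2)
      linarith
    · filter_upwards [hsemi τ hτ] with n hn
      intro h; exact absurd h hn
  have hA1 : ∀ᶠ n in atTop, ∀ τ : A, τ ∉ Gamma1 X u → τ ∉ Gamma1 X (v n) := by
    rw [eventually_all]
    intro τ
    by_cases hτ : τ ∈ Gamma1 X u
    · exact Eventually.of_forall fun n h => absurd hτ h
    · exact (hsemi τ hτ).mono fun n h _ => h
  have hA2 : ∀ᶠ n in atTop, ∀ τ : A, τ ∈ Gamma1 X (v n) → g (v n) τ ≤ g u τ + ε :=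
    eventually_all.2 hbound
  obtain ⟨n, h1, h2⟩ := (hA1.and hA2).exists
  have hsum_v := hsum (v n) (hvX n)
  -- pointwise comparison of indicators
  have key : ∀ τ : A, (Gamma1 X (v n)).indicator (g (v n)) τ ≤
      (Gamma1 X u \ {σ}).indicator (fun τ => g u τ + ε) τ := by
    intro τ
    by_cases hτ : τ ∈ Gamma1 X (v n)
    · rw [Set.indicator_of_mem hτ, Set.indicator_of_mem]
      · exact h2 τ hτ
      · refine ⟨?_, ?_⟩
        · by_contra hτu; exact (h1 τ hτu) hτ
        · simp only [Set.mem_singleton_iff]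
          rintro rfl; exact hvσ n hτ
    · rw [Set.indicator_of_notMem hτ]
      by_cases hm : τ ∈ Gamma1 X u \ {σ}
      · rw [Set.indicator_of_mem hm]
        have := (hrange u hu τ hm.1).1
        linarith
      · rw [Set.indicator_of_notMem hm]
  have key2 : ∀ τ : A, (Gamma1 X u \ {σ}).indicator (fun τ => g u τ + ε) τ ≤
      (Gamma1 X u).indicator (g u) τ + ε - (if τ = σ then g u σ + ε else 0) := by
    intro τ
    by_cases hτσ : τ = σ
    · subst hτσ
      rw [Set.indicator_of_notMem (by simp), Set.indicator_of_mem hσΓ]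
      simp
    · rw [if_neg hτσ, sub_zero]
      by_cases hτΓ : τ ∈ Gamma1 X u
      · rw [Set.indicator_of_mem (Set.mem_diff_singleton.2 ⟨hτΓ, hτσ⟩),
          Set.indicator_of_mem hτΓ]
      · rw [Set.indicator_of_notMem (fun h => hτΓ h.1), Set.indicator_of_notMem hτΓ]
        linarith
  have hle1 : (1 : ℝ) ≤ ∑ τ : A, (Gamma1 X u \ {σ}).indicator (fun τ => g u τ + ε) τ := by
    rw [← hsum_v]
    exact Finset.sum_le_sum fun τ _ => key τ
  have e1 : ∑ τ : A, ((Gamma1 X u).indicator (g u) τ + ε) = 1 + c * ε := by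
    rw [Finset.sum_add_distrib, hsum_u, Finset.sum_const, nsmul_eq_mul, Finset.card_univ,
      hcdef]
  have e2 : ∑ τ : A, (if τ = σ then g u σ + ε else 0) = g u σ + ε := by
    simp
  have hle2 : ∑ τ : A, (Gamma1 X u \ {σ}).indicator (fun τ => g u τ + ε) τ ≤
      1 + c * ε - (g u σ + ε) := by
    calc ∑ τ : A, (Gamma1 X u \ {σ}).indicator (fun τ => g u τ + ε) τ
        ≤ ∑ τ : A, ((Gamma1 X u).indicator (g u) τ + ε - (if τ = σ then g u σ + ε else 0)) :=
          Finset.sum_le_sum fun τ _ => key2 τ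
      _ = 1 + c * ε - (g u σ + ε) := by rw [Finset.sum_sub_distrib, e1, e2]
  linarith


/-- Theorem 2.4, (b) ⟺ (c).  A subshift has property g if and only if
it has a strict g-function. -/
theorem stmt4 {A : Type*} [Fintype A] [Nonempty A] [TopologicalSpace A] [DiscreteTopology A]
    (X : Set (ℤ → A)) (hX : IsSubshift X) :
    PropertyG X ↔ ∃ g : (ℕ → A) → A → ℝ, IsStrictGFunction X g := by
  constructor
  · intro hPG
    exact ⟨gFun X, forward_dir hPG⟩
  · rintro ⟨g, hg⟩
    exact backward_dir hX hg.1
end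

section
/- Let X ⊆ Σ^ℤ be a subshift with property g and property (D), and let g be a strict g-function for X. Then the admissible words of X are exactly the finite words a such that μ(x⁻)(C(a)) > 0 for some x⁻ ∈ X⁻; in particular, for all admissible words a and b of X with a ∈ ω⁺(b) and every x⁻ ∈ X⁻ ending in b, one has μ(x⁻)(C(a)) > 0. -/
open Set Filter Topology

/-- The left ray `u` can be followed in `X` by the word `a`. -/
def CanFollow {A : Type*} (X : Set (ℤ → A)) (u : ℕ → A) (a : List A) : Prop :=
  ∃ x ∈ X, (∀ n : ℕ, x (-(n : ℤ)) = u n) ∧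
    ∀ j : Fin a.length, x (((j : ℕ) : ℤ) + 1) = a.get j

/-- The left ray `x⁻ · w` obtained by appending the word `w` to the left ray `u`,
re-indexed so that the last letter of `w` sits at coordinate `0`. -/
def extendBy {A : Type*} (u : ℕ → A) (w : List A) : ℕ → A := fun n =>
  if h : n < w.length then w.get ⟨w.length - 1 - n, by omega⟩ else u (n - w.length)

/-- The measure `μ(x⁻)` generated by a g-function `g`, recorded by its cylinder values:
`μ(x⁻)(C(a)) = ∏_{k=1}^{N} g (x⁻·(a_1⋯a_{k-1}), a_k)` for words `a = (a_1,…,a_N)` that can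
follow `x⁻` in `X`, and `μ(x⁻)(C(a)) = 0` for all other words. -/
noncomputable def muOf {A : Type*} (X : Set (ℤ → A)) (g : (ℕ → A) → A → ℝ) (u : ℕ → A) :
    List A → ℝ :=
  Set.indicator {a : List A | CanFollow X u a}
    (fun a => ∏ k : Fin a.length, g (extendBy u (a.take (k : ℕ))) (a.get k))

section Helpers

variable {A : Type*}

lemma mem_shiftZ {X : Set (ℤ → A)} (hX : shiftMap '' X = X) :
    ∀ (k : ℤ) (x : ℤ → A), x ∈ X → (fun i => x (i + k)) ∈ X := by
  have fwd : ∀ x ∈ X, (fun i : ℤ => x (i + 1)) ∈ X := by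
    intro x hx
    have : shiftMap x ∈ shiftMap '' X := ⟨x, hx, rfl⟩
    rwa [hX] at this
  have bwd : ∀ x ∈ X, (fun i : ℤ => x (i - 1)) ∈ X := by
    intro x hx
    rw [← hX] at hx
    obtain ⟨y, hy, hxy⟩ := hx
    have hyx : (fun i : ℤ => x (i - 1)) = y := by
      funext i
      have h := congrFun hxy (i - 1)
      simp only [shiftMap, sub_add_cancel] at h
      exact h.symm
    rw [hyx]; exact hy
  intro k
  induction k using Int.induction_on with
  | zero => intro x hx; simpa using hx
  | succ n ih =>
      intro x hx
      have h := fwd _ (ih x hx)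
      have he : (fun i : ℤ => x (i + 1 + n)) = (fun i : ℤ => x (i + (n + 1))) := by
        funext i; congr 1; ring
      simpa [he] using h
  | pred n ih =>
      intro x hx
      have h := bwd _ (ih x hx)
      have he : (fun i : ℤ => x (i - 1 + -n)) = (fun i : ℤ => x (i + (-n - 1))) := by
        funext i; congr 1; ring
      simpa [he] using h

lemma endsAtZero_of_endsIn {x : ℤ → A} {u : ℕ → A} {b : List A}
    (hxu : ∀ n : ℕ, x (-(n : ℤ)) = u n) (hub : EndsIn u b) : EndsAtZero x b := by
  intro j
  have hj := j.isLt
  have h1 : ((j : ℕ) : ℤ) - ((b.length : ℤ) - 1) = -((b.length - 1 - (j : ℕ) : ℕ) : ℤ) := by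
    omega
  rw [h1, hxu]; exact hub j

lemma endsAtZero_append {x : ℤ → A} {e b : List A} (h : EndsAtZero x (e ++ b)) :
    EndsAtZero x b := by
  intro j
  have hj := j.isLt
  have hlt : e.length + (j : ℕ) < (e ++ b).length := by
    simp only [List.length_append]; omega
  have h2 := h ⟨e.length + (j : ℕ), hlt⟩
  have hget : (e ++ b).get ⟨e.length + (j : ℕ), hlt⟩ = b.get j := by
    simp [List.getElem_append_right]
  rw [hget] at h2
  have harg : ((e.length + (j : ℕ) : ℕ) : ℤ) - (((e ++ b).length : ℤ) - 1)
      = ((j : ℕ) : ℤ) - ((b.length : ℤ) - 1) := by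
    simp only [List.length_append]; push_cast; ring
  rwa [harg] at h2

lemma omegaWord_prepend {X : Set (ℤ → A)} {b w : List A} (e : List A)
    (h : OmegaWord X b w) : OmegaWord X (e ++ b) w := by
  intro x hx hxb
  exact h x hx (endsAtZero_append hxb)

lemma omegaWord_nil {X : Set (ℤ → A)} (b : List A) : OmegaWord X b [] := by
  intro x hx _
  exact ⟨x, hx, fun i _ => rfl, fun j => j.elim0⟩

end Helpers

section Helpers2

variable {A : Type*}

lemma omegaWord_cons {X : Set (ℤ → A)} (hX : shiftMap '' X = X) {b : List A} {σ : A}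
    {w : List A} (h1 : OmegaWord X b [σ]) (h2 : OmegaWord X (b ++ [σ]) w) :
    OmegaWord X b (σ :: w) := by
  intro x hx hxb
  obtain ⟨x', hx', hagree, hσ⟩ := h1 x hx hxb
  have hx'1 : x' 1 = σ := by
    have h := hσ ⟨0, by simp⟩
    simpa using h
  have hzX : (fun i : ℤ => x' (i + 1)) ∈ X := mem_shiftZ hX 1 x' hx'
  set z : ℤ → A := fun i => x' (i + 1) with hzdef
  have hzb : EndsAtZero z (b ++ [σ]) := by
    intro j
    have hj := j.isLt
    simp only [List.length_append, List.length_cons, List.length_nil] at hj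
    by_cases hc : (j : ℕ) < b.length
    · have hb := hxb ⟨(j : ℕ), hc⟩
      have hget : (b ++ [σ]).get j = b.get ⟨(j : ℕ), hc⟩ := by
        simp [List.getElem_append_left, hc]
      rw [hget]
      have harg : ((j : ℕ) : ℤ) - (((b ++ [σ]).length : ℤ) - 1) + 1
          = ((j : ℕ) : ℤ) - ((b.length : ℤ) - 1) := by
        simp only [List.length_append, List.length_singleton]; push_cast; ring
      show x' (((j : ℕ) : ℤ) - (((b ++ [σ]).length : ℤ) - 1) + 1) = _
      rw [harg]
      rw [hagree _ (by omega)]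
      exact hb
    · have hjb : (j : ℕ) = b.length := by omega
      have hget : (b ++ [σ]).get j = σ := by
        have : (b ++ [σ])[(j : ℕ)] = σ := by
          rw [List.getElem_append_right (by omega)]
          simp [hjb]
        simpa using this
      rw [hget]
      have harg : ((j : ℕ) : ℤ) - (((b ++ [σ]).length : ℤ) - 1) + 1 = 1 := by
        simp only [List.length_append, List.length_singleton]; omega
      show x' (((j : ℕ) : ℤ) - (((b ++ [σ]).length : ℤ) - 1) + 1) = σ
      rw [harg, hx'1]
  obtain ⟨z', hz', hagree', hw⟩ := h2 z hzX hzb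
  refine ⟨fun i => z' (i - 1), ?_, ?_, ?_⟩
  · have h := mem_shiftZ hX (-1) z' hz'
    have he : (fun i : ℤ => z' (i + -1)) = (fun i : ℤ => z' (i - 1)) := by
      funext i; rw [show i + -1 = i - 1 by ring]
    rwa [he] at h
  · intro i hi
    have h1' : z' (i - 1) = z (i - 1) := hagree' _ (by omega)
    show z' (i - 1) = x i
    rw [h1']
    show x' (i - 1 + 1) = x i
    rw [sub_add_cancel]
    exact hagree i hi
  · rintro ⟨jv, hjv⟩
    match jv, hjv with
    | 0, h0 =>
        show z' (0 + 1 - 1) = σ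
        have : z' (0 + 1 - 1) = z 0 := by
          rw [show (0 + 1 - 1 : ℤ) = 0 by ring]
          exact hagree' 0 le_rfl
        rw [this]
        show x' (0 + 1) = σ
        rw [zero_add, hx'1]
    | (m + 1), hm =>
        have hmw : m < w.length := by
          simpa using hm
        have h := hw ⟨m, hmw⟩
        show z' (((m + 1 : ℕ) : ℤ) + 1 - 1) = (σ :: w).get ⟨m + 1, hm⟩
        have harg : ((m + 1 : ℕ) : ℤ) + 1 - 1 = ((m : ℕ) : ℤ) + 1 := by push_cast; ring
        rw [harg, h]
        simp

end Helpers2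

section Helpers3

variable {A : Type*}

lemma omega1_extend {X : Set (ℤ → A)} (hX : shiftMap '' X = X) {b a : List A}
    (h : OmegaWord X b a) (k : ℕ) (hk : k < a.length) :
    OmegaWord X (b ++ a.take k) [a.get ⟨k, hk⟩] := by
  intro y hy hyb
  have htl : (a.take k).length = k := by
    simp only [List.length_take]; omega
  have hlen : (b ++ a.take k).length = b.length + k := by
    simp [htl]
  have hzX : (fun i : ℤ => y (i + -(k : ℤ))) ∈ X := mem_shiftZ hX (-(k : ℤ)) y hy
  set z : ℤ → A := fun i => y (i + -(k : ℤ)) with hzdef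
  have hzb : EndsAtZero z b := by
    intro j
    have hj := j.isLt
    have hj2 : (j : ℕ) < (b ++ a.take k).length := by omega
    have h2 := hyb ⟨(j : ℕ), hj2⟩
    have hget : (b ++ a.take k).get ⟨(j : ℕ), hj2⟩ = b.get j := by
      simp [List.getElem_append_left, hj]
    rw [hget] at h2
    show y (((j : ℕ) : ℤ) - ((b.length : ℤ) - 1) + -(k : ℤ)) = b.get j
    have harg : ((j : ℕ) : ℤ) - ((b.length : ℤ) - 1) + -(k : ℤ)
        = ((j : ℕ) : ℤ) - (((b ++ a.take k).length : ℤ) - 1) := by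
      rw [hlen]; push_cast; ring
    rw [harg]; exact h2
  obtain ⟨z', hz', hagree, hlet⟩ := h z hzX hzb
  refine ⟨fun i => z' (i + (k : ℤ)), mem_shiftZ hX (k : ℤ) z' hz', ?_, ?_⟩
  · intro i hi
    show z' (i + (k : ℤ)) = y i
    by_cases hc : i + (k : ℤ) ≤ 0
    · rw [hagree _ hc]
      show y (i + (k : ℤ) + -(k : ℤ)) = y i
      congr 1; ring
    · push_neg at hc
      obtain ⟨m, hm1, hm2⟩ : ∃ m : ℕ, (m : ℤ) = i + (k : ℤ) - 1 ∧ m < a.length := by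
        refine ⟨(i + (k : ℤ) - 1).toNat, by omega, by omega⟩
      have h3 := hlet ⟨m, hm2⟩
      have harg : i + (k : ℤ) = ((m : ℕ) : ℤ) + 1 := by omega
      rw [harg, h3]
      have hj2 : b.length + m < (b ++ a.take k).length := by omega
      have h4 := hyb ⟨b.length + m, hj2⟩
      have hget : (b ++ a.take k).get ⟨b.length + m, hj2⟩ = a.get ⟨m, hm2⟩ := by
        simp only [List.get_eq_getElem]
        rw [List.getElem_append_right (by omega)]
        simp only [List.getElem_take]
        congr 1
        omega
      rw [hget] at h4
      have harg2 : ((b.length + m : ℕ) : ℤ) - (((b ++ a.take k).length : ℤ) - 1) = i := by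
        rw [hlen]; omega
      rw [harg2] at h4
      exact h4.symm
  · rintro ⟨jv, hjv⟩
    have hjv0 : jv = 0 := by simpa using hjv
    subst hjv0
    have h3 := hlet ⟨k, hk⟩
    show z' (((0 : ℕ) : ℤ) + 1 + (k : ℤ)) = _
    have harg : ((0 : ℕ) : ℤ) + 1 + (k : ℤ) = ((k : ℕ) : ℤ) + 1 := by push_cast; ring
    rw [harg, h3]
    simp

lemma lastWord_extendBy {u : ℕ → A} {b : List A} (hb : b ≠ []) (hub : EndsIn u b)
    (t : List A) : lastWord (extendBy u t) (b.length + t.length - 1) = b ++ t := by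
  have hb1 : 1 ≤ b.length := List.length_pos_iff.2 hb
  apply List.ext_getElem
  · simp only [lastWord, List.length_ofFn, List.length_append]; omega
  intro j h1 h2
  simp only [lastWord, List.length_ofFn] at h1
  simp only [lastWord]
  rw [List.getElem_ofFn]
  show extendBy u t (b.length + t.length - 1 - j) = (b ++ t)[j]
  simp only [List.length_append] at h2
  by_cases hc : j < b.length
  · have hge : ¬ (b.length + t.length - 1 - j < t.length) := by omega
    rw [extendBy]
    rw [dif_neg hge]
    have hidx : b.length + t.length - 1 - j - t.length = b.length - 1 - j := by omega
    rw [hidx]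
    have hget := hub ⟨j, hc⟩
    simp only [List.get_eq_getElem] at hget
    rw [List.getElem_append_left hc]
    simpa using hget
  · have hlt : b.length + t.length - 1 - j < t.length := by omega
    rw [extendBy, dif_pos hlt]
    rw [List.getElem_append_right (by omega)]
    simp only [List.get_eq_getElem]
    congr 1
    omega

lemma extendBy_mem_Xminus {X : Set (ℤ → A)} (hX : shiftMap '' X = X) {u : ℕ → A}
    {a : List A} {x' : ℤ → A} (hx' : x' ∈ X) (hx'u : ∀ n : ℕ, x' (-(n : ℤ)) = u n)
    (hlet : ∀ j : Fin a.length, x' (((j : ℕ) : ℤ) + 1) = a.get j)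
    (k : ℕ) (hk : k ≤ a.length) : extendBy u (a.take k) ∈ Xminus X := by
  have htl : (a.take k).length = k := by
    simp only [List.length_take]; omega
  refine ⟨fun i => x' (i + (k : ℤ)), mem_shiftZ hX (k : ℤ) x' hx', ?_⟩
  intro n
  show extendBy u (a.take k) n = x' (-(n : ℤ) + (k : ℤ))
  by_cases hc : n < k
  · have hc' : n < (a.take k).length := by omega
    rw [extendBy, dif_pos hc']
    have hm : k - 1 - n < a.length := by omega
    have h3 := hlet ⟨k - 1 - n, hm⟩
    have harg : ((k - 1 - n : ℕ) : ℤ) + 1 = -(n : ℤ) + (k : ℤ) := by omega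
    rw [harg] at h3
    rw [h3]
    simp only [List.get_eq_getElem, List.getElem_take]
    congr 1
    omega
  · rw [extendBy, dif_neg (show ¬ n < (a.take k).length by omega)]
    rw [htl]
    have harg : -(n : ℤ) + (k : ℤ) = -((n - k : ℕ) : ℤ) := by omega
    rw [harg, hx'u]

end Helpers3

section Helpers4

variable {A : Type*}

lemma muOf_pos_core {X : Set (ℤ → A)} [Fintype A] [TopologicalSpace A]
    (hshift : shiftMap '' X = X) {g : (ℕ → A) → A → ℝ} (hg : IsStrictGFunction X g)
    {a b : List A} (hb : b ≠ []) (hBA : OmegaWord X b a)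
    {u : ℕ → A} (hu : u ∈ Xminus X) (hub : EndsIn u b) : 0 < muOf X g u a := by
  obtain ⟨x, hxX, hux⟩ := hu
  have hxu : ∀ n : ℕ, x (-(n : ℤ)) = u n := fun n => (hux n).symm
  have hxb : EndsAtZero x b := endsAtZero_of_endsIn hxu hub
  obtain ⟨x', hx', hagree, hlet⟩ := hBA x hxX hxb
  have hx'u : ∀ n : ℕ, x' (-(n : ℤ)) = u n := by
    intro n
    rw [hagree _ (by omega : -((n : ℕ) : ℤ) ≤ 0)]
    exact hxu n
  have hCF : CanFollow X u a := ⟨x', hx', hx'u, hlet⟩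
  have hmu : muOf X g u a
      = ∏ k : Fin a.length, g (extendBy u (a.take (k : ℕ))) (a.get k) := by
    simp only [muOf]
    exact Set.indicator_of_mem (show a ∈ {a : List A | CanFollow X u a} from hCF)
      (fun a : List A => ∏ k : Fin a.length, g (extendBy u (a.take (k : ℕ))) (a.get k))
  rw [hmu]
  apply Finset.prod_pos
  intro k _
  have hk := k.isLt
  have hvX : extendBy u (a.take (k : ℕ)) ∈ Xminus X :=
    extendBy_mem_Xminus hshift hx' hx'u hlet (k : ℕ) (le_of_lt hk)
  have hlw : lastWord (extendBy u (a.take (k : ℕ)))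
      (b.length + (a.take (k : ℕ)).length - 1) = b ++ a.take (k : ℕ) :=
    lastWord_extendBy hb hub _
  have homega : OmegaWord X (b ++ a.take (k : ℕ)) [a.get k] := by
    have h0 := omega1_extend hshift hBA (k : ℕ) hk
    simpa using h0
  have hdelta : a.get k ∈ Delta1 X (extendBy u (a.take (k : ℕ))) := by
    refine Set.mem_iUnion.2 ⟨b.length + (a.take (k : ℕ)).length - 1, ?_⟩
    show OmegaWord X _ [a.get k]
    rw [hlw]
    exact homega
  exact hg.2 _ hvX _ hdelta

lemma lemmaA_aux {X : Set (ℤ → A)} (hX : shiftMap '' X = X) (hPD : PropertyD X) :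
    ∀ (N : ℕ) (q p w : List A), q.length = N → p ≠ [] → Admissible X (p ++ q) →
      (∀ e : List A, OmegaWord X (e ++ (p ++ q)) w) →
      ∃ b, b ≠ [] ∧ Admissible X b ∧ OmegaWord X b (q ++ w) := by
  intro N
  induction N with
  | zero =>
      intro q p w hq hp hadm hinv
      have hqnil : q = [] := List.length_eq_zero_iff.1 hq
      subst hqnil
      refine ⟨p, hp, by simpa using hadm, ?_⟩
      have h0 := hinv []
      simpa using h0
  | succ n ih =>
      intro q p w hq hp hadm hinv
      rcases List.eq_nil_or_concat q with rfl | ⟨q', σ, rfl⟩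
      · simp at hq
      · simp only [List.concat_eq_append] at hq hadm hinv ⊢
        have hadm' : Admissible X ((p ++ q') ++ [σ]) := by
          have he : (p ++ q') ++ [σ] = p ++ (q' ++ [σ]) := by simp
          rwa [he]
        obtain ⟨a, ha, hadma, homa⟩ := hPD (p ++ q') σ
          (fun h => hp (List.append_eq_nil_iff.1 h).1) hadm'
        have hlen' : q'.length = n := by
          simp only [List.length_append, List.length_singleton] at hq; omega
        have hinv' : ∀ e : List A, OmegaWord X (e ++ ((a ++ p) ++ q')) (σ :: w) := by
          intro e
          apply omegaWord_cons hX
          · have h1 : OmegaWord X (a ++ (p ++ q')) [σ] := homa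
            have h2 := omegaWord_prepend e h1
            have he : e ++ (a ++ (p ++ q')) = e ++ ((a ++ p) ++ q') := by simp
            rwa [he] at h2
          · have h2 := hinv (e ++ a)
            have he : (e ++ a) ++ (p ++ (q' ++ [σ])) = (e ++ ((a ++ p) ++ q')) ++ [σ] := by
              simp
            rwa [he] at h2
        have hadm'' : Admissible X ((a ++ p) ++ q') := by
          have he : (a ++ p) ++ q' = a ++ (p ++ q') := by simp
          rwa [he]
        obtain ⟨b, hb, hbadm, hbw⟩ := ih q' (a ++ p) (σ :: w) hlen'
          (fun h => ha (List.append_eq_nil_iff.1 h).1) hadm'' hinv'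
        refine ⟨b, hb, hbadm, ?_⟩
        have he : q' ++ (σ :: w) = (q' ++ [σ]) ++ w := by simp
        rwa [he] at hbw

lemma admissible_cons_of_admissible {X : Set (ℤ → A)} {w : List A}
    (h : Admissible X w) : ∃ τ : A, Admissible X (τ :: w) := by
  obtain ⟨x, hx, i, hocc⟩ := h
  refine ⟨x (i - 1), x, hx, i - 1, ?_⟩
  rintro ⟨jv, hjv⟩
  match jv, hjv with
  | 0, h0 =>
      show x (i - 1 + ((0 : ℕ) : ℤ)) = (x (i - 1) :: w).get ⟨0, h0⟩
      norm_num
  | (m + 1), hm =>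
      have hmw : m < w.length := by simpa using hm
      have h2 := hocc ⟨m, hmw⟩
      show x (i - 1 + ((m + 1 : ℕ) : ℤ)) = (x (i - 1) :: w).get ⟨m + 1, hm⟩
      have harg : i - 1 + ((m + 1 : ℕ) : ℤ) = i + ((m : ℕ) : ℤ) := by push_cast; ring
      rw [harg, h2]
      simp

lemma lemmaA {X : Set (ℤ → A)} (hX : shiftMap '' X = X) (hPD : PropertyD X)
    {w : List A} (hadm : Admissible X w) :
    ∃ b, b ≠ [] ∧ Admissible X b ∧ OmegaWord X b w := by
  obtain ⟨τ, hτ⟩ := admissible_cons_of_admissible hadm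
  obtain ⟨b, h1, h2, h3⟩ := lemmaA_aux hX hPD w.length w [τ] [] rfl (by simp)
    (by simpa using hτ) (fun e => omegaWord_nil _)
  exact ⟨b, h1, h2, by simpa using h3⟩

end Helpers4

/-- Lemma 3.4.  For a subshift with properties g and (D) and a strict
g-function `g`, the admissible words are exactly the words `a` with `μ(x⁻)(C(a)) > 0`
for some `x⁻ ∈ X⁻`; in particular `μ(x⁻)(C(a)) > 0` whenever `a ∈ ω⁺(b)` and `x⁻` ends
in `b`. -/
theorem stmt8 {A : Type*} [Fintype A] [Nonempty A] [TopologicalSpace A] [DiscreteTopology A]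
    (X : Set (ℤ → A)) (hX : IsSubshift X) (hPg : PropertyG X) (hPD : PropertyD X)
    (g : (ℕ → A) → A → ℝ) (hg : IsStrictGFunction X g) :
    (∀ w : List A, Admissible X w ↔ ∃ u ∈ Xminus X, 0 < muOf X g u w) ∧
    (∀ a b : List A, a ≠ [] → b ≠ [] → Admissible X a → Admissible X b →
      OmegaWord X b a → ∀ u ∈ Xminus X, EndsIn u b → 0 < muOf X g u a) := by
  obtain ⟨hXne, hXcl, hXsh⟩ := hX
  constructor
  · intro w
    constructor
    · intro hadm
      obtain ⟨b, hb, hbadm, hbw⟩ := lemmaA hXsh hPD hadm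
      obtain ⟨y, hy, i, hocc⟩ := hbadm
      have hx0X : (fun t : ℤ => y (t + (i + (b.length : ℤ) - 1))) ∈ X :=
        mem_shiftZ hXsh _ y hy
      refine ⟨fun n => y (-(n : ℤ) + (i + (b.length : ℤ) - 1)), ⟨_, hx0X, fun n => rfl⟩, ?_⟩
      refine muOf_pos_core hXsh hg hb hbw ⟨_, hx0X, fun n => rfl⟩ ?_
      intro j
      have hj := j.isLt
      show y (-((b.length - 1 - (j : ℕ) : ℕ) : ℤ) + (i + (b.length : ℤ) - 1)) = b.get j
      have harg : -((b.length - 1 - (j : ℕ) : ℕ) : ℤ) + (i + (b.length : ℤ) - 1)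
          = i + ((j : ℕ) : ℤ) := by omega
      rw [harg]
      exact hocc j
    · rintro ⟨u, huX, hpos⟩
      by_contra hnadm
      have hnot : w ∉ {a : List A | CanFollow X u a} := by
        intro hCF
        obtain ⟨x, hxX, _, hlet⟩ := hCF
        refine hnadm ⟨x, hxX, 1, fun j => ?_⟩
        rw [show (1 : ℤ) + ((j : ℕ) : ℤ) = ((j : ℕ) : ℤ) + 1 by ring]
        exact hlet j
      have hz : muOf X g u w = 0 := by
        simp only [muOf]
        exact Set.indicator_of_notMem hnot
          (fun a : List A => ∏ k : Fin a.length, g (extendBy u (a.take (k : ℕ))) (a.get k))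
      rw [hz] at hpos
      exact lt_irrefl 0 hpos
  · intro a b ha hb hadma hadmb hom u huX hub
    exact muOf_pos_core hXsh hg hb hom huX hub
end
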